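/- arXiv:1610.07207 — 3 statements merged into one kernel-verified Lean document; each statement's English description precedes it below -/
import Mathlib

section
/- Let i : E → F be a t-exact fully faithful functor of stable ∞-categories equipped with t-structures. Then the induced exact functor i^♥ : E^♥ → F^♥ on hearts is fully faithful and exhibits E^♥ as a weak Serre subcategory of F^♥: the essential image of i^♥ is closed under extensions in F^♥. -/
open CategoryTheory Category Limits Pretriangulated Triangulated

universe v u u'

namespace WeakSerreAux

variable {C : Type u} [Category.{v} C] [Preadditive C] [HasZeroObject C] [HasShift C ℤ]
  [∀ n : ℤ, (shiftFunctor C n).Additive] [Pretriangulated C] (t : TStructure C)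

/-- The general orthogonality lemma for a t-structure. -/
lemma zero {X Y : C} (f : X ⟶ Y) (a b : ℤ) (h : a < b)
    (hX : t.le a X) (hY : t.ge b Y) : f = 0 := by
  have hX' : t.le 0 (X⟦a⟧) := t.le_shift a a 0 (by omega) X hX
  have hY' : t.ge 1 (Y⟦a⟧) :=
    t.ge_antitone (by omega : (1:ℤ) ≤ b - a) _ (t.ge_shift b a (b - a) (by omega) Y hY)
  have h0 := t.zero' ((shiftFunctor C a).map f) hX' hY'
  apply (shiftFunctor C a).map_injective
  rw [h0, Functor.map_zero]

/-- If an object is left-orthogonal to all `≤ n-1` objects, it is `≥ n`. -/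
lemma ge_of_orth (n : ℤ) (X : C)
    (h : ∀ (A : C), t.le (n-1) A → ∀ (u : A ⟶ X), u = 0) : t.ge n X := by
  obtain ⟨X', X'', hX', hX'', a, b, c, mem⟩ := t.exists_triangle X (n-1) n (by omega)
  have ha : a = 0 := h X' hX' a
  have hzero : IsZero X' := by
    obtain ⟨s, hs⟩ := Triangle.coyoneda_exact₂ _ (inv_rot_of_distTriang _ mem) (𝟙 _)
      (by rw [show (Triangle.mk a b c).invRotate.mor₂ = 0 from ha, comp_zero])
    have hs0 : s = 0 := zero t s (n-1) (n+1) (by omega) hX'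
      (t.ge_shift n (-1) (n+1) (by omega) X'' hX'')
    rw [hs0, zero_comp] at hs
    exact (IsZero.iff_id_eq_zero X').2 hs
  have : IsIso b := (Triangle.isZero₁_iff_isIso₂ _ mem).1 hzero
  exact (t.ge n).prop_of_iso (asIso b).symm hX''

/-- `≥ n` objects are closed under extensions. -/
lemma ge₂ (T : Triangle C) (hT : T ∈ distTriang C) (n : ℤ)
    (h₁ : t.ge n T.obj₁) (h₃ : t.ge n T.obj₃) : t.ge n T.obj₂ := by
  refine ge_of_orth t n _ (fun A hA u => ?_)
  obtain ⟨w, hw⟩ := Triangle.coyoneda_exact₂ _ hT u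
    (zero t _ (n-1) n (by omega) hA h₃)
  rw [hw, zero t w (n-1) n (by omega) hA h₁, zero_comp]

/-- If an object is right-orthogonal to all `≥ n+1` objects, it is `≤ n`. -/
lemma le_of_orth (n : ℤ) (X : C)
    (h : ∀ (A : C), t.ge (n+1) A → ∀ (u : X ⟶ A), u = 0) : t.le n X := by
  obtain ⟨X', X'', hX', hX'', a, b, c, mem⟩ := t.exists_triangle X n (n+1) rfl
  have hb : b = 0 := h X'' hX'' b
  have hzero : IsZero X'' := by
    obtain ⟨s, hs⟩ := Triangle.yoneda_exact₃ _ mem (𝟙 _) (by rw [show (Triangle.mk a b c).mor₂ = 0 from hb, zero_comp])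
    have hs0 : s = 0 := zero t s (n-1) (n+1) (by omega)
      (t.le_shift n 1 (n-1) (by omega) X' hX') hX''
    rw [hs0, comp_zero] at hs
    exact (IsZero.iff_id_eq_zero X'').2 hs
  have : IsIso a := (Triangle.isZero₃_iff_isIso₁ _ mem).1 hzero
  exact (t.le n).prop_of_iso (asIso a) hX'

/-- `≤ n` objects are closed under extensions. -/
lemma le₂ (T : Triangle C) (hT : T ∈ distTriang C) (n : ℤ)
    (h₁ : t.le n T.obj₁) (h₃ : t.le n T.obj₃) : t.le n T.obj₂ := by
  refine le_of_orth t n _ (fun A hA u => ?_)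
  obtain ⟨w, hw⟩ := Triangle.yoneda_exact₂ _ hT u
    (zero t _ n (n+1) (by omega) h₁ hA)
  rw [hw, zero t w n (n+1) (by omega) h₃ hA, comp_zero]

end WeakSerreAux

open WeakSerreAux

theorem heart_of_t_exact_fully_faithful_is_weak_serre
    (C : Type u) [Category.{v} C] [Preadditive C] [HasZeroObject C] [HasShift C ℤ]
    [∀ n : ℤ, (shiftFunctor C n).Additive] [Pretriangulated C]
    (D : Type u') [Category.{v} D] [Preadditive D] [HasZeroObject D] [HasShift D ℤ]
    [∀ n : ℤ, (shiftFunctor D n).Additive] [Pretriangulated D]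
    (tC : TStructure C) (tD : TStructure D)
    (i : C ⥤ D) [i.CommShift ℤ] [i.IsTriangulated] [i.Full] [i.Faithful]
    (hle : ∀ X : C, tC.le 0 X → tD.le 0 (i.obj X))
    (hge : ∀ X : C, tC.ge 0 X → tD.ge 0 (i.obj X)) :
    -- the induced functor on hearts is fully faithful
    (∀ (X Y : C), (tC.le 0 X ∧ tC.ge 0 X) → (tC.le 0 Y ∧ tC.ge 0 Y) →
      Function.Bijective (fun φ : X ⟶ Y => i.map φ)) ∧
    -- the heart of `C` is closed under extensions in the heart of `D`
    (∀ (x z : C) (hx : tC.le 0 x ∧ tC.ge 0 x) (hz : tC.le 0 z ∧ tC.ge 0 z)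
      (y : ObjectProperty.FullSubcategory (fun A : D => tD.le 0 A ∧ tD.ge 0 A))
      (f : (⟨i.obj x, hle x hx.1, hge x hx.2⟩ :
            ObjectProperty.FullSubcategory (fun A : D => tD.le 0 A ∧ tD.ge 0 A)) ⟶ y)
      (g : y ⟶ (⟨i.obj z, hle z hz.1, hge z hz.2⟩ :
            ObjectProperty.FullSubcategory (fun A : D => tD.le 0 A ∧ tD.ge 0 A)))
      (w : f ≫ g = 0),
      Nonempty (IsLimit (KernelFork.ofι f w)) →
      Nonempty (IsColimit (CokernelCofork.ofπ g w)) →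
      ∃ y' : C, (tC.le 0 y' ∧ tC.ge 0 y') ∧ Nonempty (i.obj y' ≅ y.obj)) := by
  constructor
  · intro X Y _ _
    exact ⟨fun _ _ h => i.map_injective h, fun ψ => ⟨i.preimage ψ, i.map_preimage ψ⟩⟩
  · rintro x z hx hz y f g w ⟨hker⟩ ⟨hcoker⟩
    let f' : i.obj x ⟶ y.obj := f.hom
    let g' : y.obj ⟶ i.obj z := g.hom
    -- `f` is a monomorphism in the heart
    have hmono : Mono f := by simpa using mono_of_isLimit_fork hker
    -- cone of `f` in `D`
    obtain ⟨c, π, δ, hT1⟩ :=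
      Pretriangulated.distinguished_cocone_triangle f'
    -- `c` is `≤ 0`
    have hcLE : tD.le 0 c := by
      refine le₂ tD _ (rot_of_distTriang _ hT1) 0 y.property.1 ?_
      exact tD.le_monotone (by omega : (-1:ℤ) ≤ 0) _
        (tD.le_shift 0 1 (-1) (by omega) _ (hle x hx.1))
    -- `c` is `≥ 0`
    have hcGE : tD.ge 0 c := by
      refine ge_of_orth tD 0 c (fun T hTle u => ?_)
      have hv : u ≫ δ = 0 := by
        set v : T ⟶ (i.obj x)⟦(1:ℤ)⟧ := u ≫ δ with hvdef
        set e₁ := shiftFunctorCompIsoId D (1:ℤ) (-1:ℤ) (by omega) with he₁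
        set α : (T⟦(-1:ℤ)⟧) ⟶ i.obj x := v⟦(-1:ℤ)⟧' ≫ e₁.hom.app (i.obj x) with hα
        have h1 : v ≫ f'⟦(1:ℤ)⟧' = 0 := by
          have hz31 : δ ≫ f'⟦(1:ℤ)⟧' = 0 := comp_distTriang_mor_zero₃₁ _ hT1
          rw [hvdef, assoc, hz31, comp_zero]
        have hnat : (f'⟦(1:ℤ)⟧')⟦(-1:ℤ)⟧' ≫ e₁.hom.app y.obj =
            e₁.hom.app (i.obj x) ≫ f' := by
          simpa using e₁.hom.naturality f'
        have hαf : α ≫ f' = 0 := by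
          rw [hα, assoc, ← hnat, ← Functor.map_comp_assoc, h1, Functor.map_zero, zero_comp]
        -- truncate `T⟦-1⟧`
        obtain ⟨t', t'', ht'LE, ht''GE, a, b, cc, memt⟩ :=
          tD.exists_triangle (T⟦(-1:ℤ)⟧) (-1) 0 (by omega)
        have htLE : tD.le 0 (T⟦(-1:ℤ)⟧) := tD.le_shift (0-1) (-1) 0 (by omega) T hTle
        have ht''LE : tD.le 0 t'' := by
          refine le₂ tD _ (rot_of_distTriang _ memt) 0 htLE ?_
          exact tD.le_monotone (by omega : (-2:ℤ) ≤ 0) _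
            (tD.le_shift (-1) 1 (-2) (by omega) _ ht'LE)
        -- `α` factors through `t''`
        obtain ⟨β, hβ⟩ : ∃ β : t'' ⟶ i.obj x, α = b ≫ β := Triangle.yoneda_exact₂ _ memt α
          (zero tD _ (-1) 0 (by omega) ht'LE (hge x hx.2))
        -- `β ≫ f = 0` in `D`
        have hβf : β ≫ f' = 0 := by
          have hb0 : b ≫ (β ≫ f') = 0 := by
            rw [← assoc, ← hβ, hαf]
          obtain ⟨s, hs⟩ : ∃ s : t'⟦(1:ℤ)⟧ ⟶ y.obj, β ≫ f' = cc ≫ s :=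
            Triangle.yoneda_exact₃ _ memt (β ≫ f') hb0
          rw [hs, zero tD s (-2) 0 (by omega)
            (tD.le_shift (-1) 1 (-2) (by omega) _ ht'LE) y.property.2, comp_zero]
        -- use that `f` is mono in the heart to get `β = 0`
        have hβ0 : β = 0 := by
          let t''h : ObjectProperty.FullSubcategory (fun A : D => tD.le 0 A ∧ tD.ge 0 A) :=
            ⟨t'', ht''LE, ht''GE⟩
          let βh : t''h ⟶ (⟨i.obj x, hle x hx.1, hge x hx.2⟩ :
            ObjectProperty.FullSubcategory (fun A : D => tD.le 0 A ∧ tD.ge 0 A)) := ObjectProperty.homMk β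
          have h0 : βh ≫ f = 0 := ObjectProperty.hom_ext _ hβf
          have h1 : βh = 0 := by
            rw [← cancel_mono f, h0, zero_comp]
          exact congrArg (fun q => q.hom) h1
        have hα0 : α = 0 := by rw [hβ, hβ0, comp_zero]
        have hv' : (shiftFunctor D (-1:ℤ)).map v = 0 := by
          have h2 := hα0
          rw [hα] at h2
          have h3 := congrArg (fun q => q ≫ e₁.inv.app (i.obj x)) h2
          simpa using h3
        exact (shiftFunctor D (-1:ℤ)).map_injective (by rw [hv', Functor.map_zero])
      obtain ⟨u', hu'⟩ : ∃ u' : T ⟶ y.obj, u = u' ≫ π := Triangle.coyoneda_exact₃ _ hT1 u hv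
      rw [hu', zero tD u' (0-1) 0 (by omega) hTle y.property.2, zero_comp]
    -- the heart object `c'` and the projection
    let Hr := ObjectProperty.FullSubcategory (fun A : D => tD.le 0 A ∧ tD.ge 0 A)
    let c' : Hr := ⟨c, hcLE, hcGE⟩
    let π' : y ⟶ c' := ObjectProperty.homMk π
    have wπ : f ≫ π' = 0 := ObjectProperty.hom_ext _ (comp_distTriang_mor_zero₁₂ _ hT1)
    -- any map out of `c'` killing `π'` is zero
    have hinj : ∀ (P : Hr) (m : c' ⟶ P), π' ≫ m = 0 → m = 0 := by
      intro P m hm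
      obtain ⟨s, hs⟩ : ∃ s : (i.obj x)⟦(1:ℤ)⟧ ⟶ P.obj, m.hom = δ ≫ s :=
        Triangle.yoneda_exact₃ _ hT1 (X := P.obj) m.hom (congrArg (fun q => q.hom) hm)
      have hs0 : s = 0 := zero tD s (-1) 0 (by omega)
        (tD.le_shift 0 1 (-1) (by omega) _ (hle x hx.1)) P.property.2
      have hm0 : m.hom = 0 := by rw [hs, hs0, comp_zero]
      exact ObjectProperty.hom_ext _ hm0
    -- lifting property
    have key : ∀ (P : Hr) (u0 : y ⟶ P), f ≫ u0 = 0 → ∃ m : c' ⟶ P, π' ≫ m = u0 := by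
      intro P u0 hu0
      obtain ⟨m, hm⟩ : ∃ m : c ⟶ P.obj, u0.hom = π ≫ m := Triangle.yoneda_exact₂ _ hT1 (X := P.obj) u0.hom (congrArg (fun q => q.hom) hu0)
      exact ⟨ObjectProperty.homMk m, ObjectProperty.hom_ext _ hm.symm⟩
    -- `π'` is a cokernel of `f` in the heart
    have hcolim : IsColimit (CokernelCofork.ofπ π' wπ) := by
      refine Cofork.IsColimit.mk _
        (fun s => (key s.pt s.π (CokernelCofork.condition s)).choose)
        (fun s => (key s.pt s.π (CokernelCofork.condition s)).choose_spec)
        (fun s m hm => ?_)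
      let m' : c' ⟶ s.pt := m
      have hm' : π' ≫ m' = s.π := hm
      have h2 : π' ≫ (m' - (key s.pt s.π (CokernelCofork.condition s)).choose) = 0 := by
        rw [Preadditive.comp_sub, hm',
          (key s.pt s.π (CokernelCofork.condition s)).choose_spec, sub_self]
      have h3 := hinj s.pt _ h2
      rw [sub_eq_zero] at h3
      exact h3
    -- compare the two cokernels
    let e : c' ≅ (⟨i.obj z, hle z hz.1, hge z hz.2⟩ : Hr) :=
      hcolim.coconePointUniqueUpToIso hcoker
    have hcomp : π' ≫ e.hom = g := by
      simpa using hcolim.comp_coconePointUniqueUpToIso_hom hcoker WalkingParallelPair.one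
    let eD : c ≅ i.obj z := (ObjectProperty.ι _).mapIso e
    have hcompD : π ≫ eD.hom = g' := congrArg (fun q => q.hom) hcomp
    -- the triangle `i x ⟶ y ⟶ i z`
    have hT2 : Triangle.mk f' g' (eD.inv ≫ δ) ∈
        distTriang D := by
      refine isomorphic_distinguished _ hT1 _ ?_
      refine Triangle.isoMk _ _ (Iso.refl _) (Iso.refl _) eD.symm ?_ ?_ ?_
      · show f' ≫ 𝟙 y.obj = 𝟙 (i.obj x) ≫ f'; simp
      · show g' ≫ eD.inv = 𝟙 y.obj ≫ π
        rw [id_comp, ← hcompD, assoc, eD.hom_inv_id, comp_id]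
      · show (eD.inv ≫ δ) ≫ (𝟙 (i.obj x))⟦(1:ℤ)⟧' = eD.inv ≫ δ
        simp
    -- get a map `ψ : z ⟶ x⟦1⟧` in `C`
    have hψ : i.map (i.preimage ((eD.inv ≫ δ) ≫ (i.commShiftIso (1:ℤ)).inv.app x)) =
        (eD.inv ≫ δ) ≫ (i.commShiftIso (1:ℤ)).inv.app x := i.map_preimage _
    -- complete `ψ` to a triangle in `C`
    obtain ⟨Q, h, k, hT3⟩ := Pretriangulated.distinguished_cocone_triangle
      (i.preimage ((eD.inv ≫ δ) ≫ (i.commShiftIso (1:ℤ)).inv.app x))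
    -- `Q⟦-1⟧` is in the heart of `C`
    have hT5 := inv_rot_of_distTriang _ (inv_rot_of_distTriang _ hT3)
    have hxiso : tC.le 0 ((x⟦(1:ℤ)⟧)⟦(-1:ℤ)⟧) ∧ tC.ge 0 ((x⟦(1:ℤ)⟧)⟦(-1:ℤ)⟧) := by
      constructor
      · exact (tC.le 0).prop_of_iso
          (((shiftFunctorCompIsoId C (1:ℤ) (-1:ℤ) (by omega)).app x).symm) hx.1
      · exact (tC.ge 0).prop_of_iso
          (((shiftFunctorCompIsoId C (1:ℤ) (-1:ℤ) (by omega)).app x).symm) hx.2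
    have hy'LE : tC.le 0 (Q⟦(-1:ℤ)⟧) := le₂ tC _ hT5 0 hxiso.1 hz.1
    have hy'GE : tC.ge 0 (Q⟦(-1:ℤ)⟧) := ge₂ tC _ hT5 0 hxiso.2 hz.2
    refine ⟨Q⟦(-1:ℤ)⟧, ⟨hy'LE, hy'GE⟩, ?_⟩
    -- compare `i.mapTriangle.obj T3` with the double rotation of `T2`
    have hT6 := i.map_distinguished _ hT3
    have hT2rr := rot_of_distTriang _ (rot_of_distTriang _ hT2)
    have comm : (i.mapTriangle.obj (Triangle.mk
          (i.preimage ((eD.inv ≫ δ) ≫ (i.commShiftIso (1:ℤ)).inv.app x)) h k)).mor₁ ≫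
        ((i.commShiftIso (1:ℤ)).app x).hom =
        (Iso.refl (i.obj z)).hom ≫
          ((Triangle.mk f' g'
            (eD.inv ≫ δ)).rotate.rotate).mor₁ := by
      show i.map (i.preimage ((eD.inv ≫ δ) ≫ (i.commShiftIso (1:ℤ)).inv.app x)) ≫
        (i.commShiftIso (1:ℤ)).hom.app x = 𝟙 (i.obj z) ≫ (eD.inv ≫ δ)
      rw [hψ, assoc, Iso.inv_hom_id_app]
      simp
    let E := isoTriangleOfIso₁₂ _ _ hT6 hT2rr (Iso.refl (i.obj z))
      ((i.commShiftIso (1:ℤ)).app x) comm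
    -- extract the isomorphism on the third objects
    let eQ : i.obj Q ≅ (y.obj)⟦(1:ℤ)⟧ := Triangle.π₃.mapIso E
    exact ⟨(i.commShiftIso (-1:ℤ)).app Q ≪≫ (shiftFunctor D (-1:ℤ)).mapIso eQ ≪≫
      (shiftFunctorCompIsoId D (1:ℤ) (-1:ℤ) (by omega)).app y.obj⟩
end

section
/- Let E be a small stable ∞-category (or small triangulated category) admitting a bounded t-structure. Then E is idempotent complete (Karoubian): every idempotent endomorphism splits. -/
open CategoryTheory Category Limits Preadditive Pretriangulated Triangulated

universe v u

section Aux

variable {C : Type u} [Category.{v} C] [Preadditive C] [HasZeroObject C] [HasShift C ℤ]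
  [∀ n : ℤ, (shiftFunctor C n).Additive] [Pretriangulated C] (t : TStructure C)

/-- Morphisms from a `≤ a` object to a `≥ b` object vanish when `a < b`. -/
lemma tstr_zero {a b : ℤ} (hab : a < b) {X Y : C} (f : X ⟶ Y)
    (hX : t.le a X) (hY : t.ge b Y) : f = 0 := by
  have hX' : t.le 0 (X⟦a⟧) := t.le_shift a a 0 (by omega) X hX
  have hY' : t.ge (b - a) (Y⟦a⟧) := t.ge_shift b a (b - a) (by omega) Y hY
  have hY'' : t.ge 1 (Y⟦a⟧) := t.ge_antitone (by omega) _ hY'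
  have hz : (shiftFunctor C a).map f = 0 := t.zero' _ hX' hY''
  apply (shiftFunctor C a).map_injective
  rw [hz, Functor.map_zero]

/-- Splitting of idempotents on objects concentrated in a single degree. -/
lemma heart_split (c : ℤ) (X : C) (hle : t.le c X) (hge : t.ge c X)
    (e : X ⟶ X) (he : e ≫ e = e) :
    ∃ (Y : C) (i : Y ⟶ X) (p : X ⟶ Y), i ≫ p = 𝟙 Y ∧ p ≫ i = e := by
  have hX1 : t.le (c - 1) (X⟦(1 : ℤ)⟧) := t.le_shift c 1 (c - 1) (by omega) X hle
  obtain ⟨Cn, g, h, hT1⟩ := distinguished_cocone_triangle (𝟙 X - e)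
  obtain ⟨K, Y, hK, hY, ι, q, δ, hT2⟩ := t.exists_triangle Cn (c - 1) c (by omega)
  have hK1 : t.le (c - 2) (K⟦(1 : ℤ)⟧) := t.le_shift (c - 1) 1 (c - 2) (by omega) K hK
  have hv0 : (𝟙 X - e) ≫ e = 0 := by rw [sub_comp, id_comp, he, sub_self]
  obtain ⟨v, hv⟩ := Triangle.yoneda_exact₂ _ hT1 e hv0
  change Cn ⟶ X at v
  change e = g ≫ v at hv
  have hιv : ι ≫ v = 0 := tstr_zero t (by omega : c - 1 < c) _ hK hge
  obtain ⟨s, hs⟩ := Triangle.yoneda_exact₂ _ hT2 v hιv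
  change Y ⟶ X at s
  change v = q ≫ s at hs
  have heg : e ≫ g = g := by
    have h0 := comp_distTriang_mor_zero₁₂ _ hT1
    change (𝟙 X - e) ≫ g = 0 at h0
    rw [sub_comp, id_comp, sub_eq_zero] at h0
    exact h0.symm
  have hrs : (g ≫ q) ≫ s = e := by rw [assoc, ← hs, ← hv]
  have key : ∀ (u : Y ⟶ Y), g ≫ q ≫ u = 0 → u = 0 := by
    intro u hu
    obtain ⟨k, hk⟩ := Triangle.yoneda_exact₃ _ hT1 (q ≫ u) hu
    change X⟦(1 : ℤ)⟧ ⟶ Y at k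
    change q ≫ u = h ≫ k at hk
    rw [tstr_zero t (by omega : c - 1 < c) k hX1 hY, comp_zero] at hk
    obtain ⟨m, hm⟩ := Triangle.yoneda_exact₃ _ hT2 u hk
    change K⟦(1 : ℤ)⟧ ⟶ Y at m
    change u = δ ≫ m at hm
    rw [tstr_zero t (by omega : c - 2 < c) m hK1 hY, comp_zero] at hm
    exact hm
  have hsr : s ≫ (g ≫ q) = 𝟙 Y := by
    have h2 : g ≫ (q ≫ (s ≫ (g ≫ q))) = g ≫ q := by
      rw [← assoc, ← assoc, ← assoc, hrs, heg]
    have hz : g ≫ q ≫ (s ≫ (g ≫ q) - 𝟙 Y) = 0 := by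
      simp only [comp_sub, comp_id]
      rw [h2, sub_self]
    have h3 := key _ hz
    rwa [sub_eq_zero] at h3
  exact ⟨Y, s, g ≫ q, hsr, hrs⟩

omit [HasZeroObject C] [HasShift C ℤ] [∀ (n : ℤ), (shiftFunctor C n).Additive] [Pretriangulated C] in
/-- Two idempotents whose difference squares to zero are conjugate. -/
lemma conj_idem {X : C} (e d : X ⟶ X) (hee : e ≫ e = e) (hdd : d ≫ d = 0)
    (hpp : (e + d) ≫ (e + d) = e + d) :
    ∃ c c' : X ⟶ X, c ≫ c' = 𝟙 X ∧ c' ≫ c = 𝟙 X ∧ e ≫ c = c ≫ (e + d) := by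
  have hsum : e ≫ d + d ≫ e = d := by
    have h2 : e + (e ≫ d + d ≫ e) = e + d := by
      conv_rhs => rw [← hpp]
      simp only [add_comp, comp_add, hee, hdd]
      abel
    exact add_left_cancel h2
  have hde : d ≫ e = d - e ≫ d := eq_sub_of_add_eq' hsum
  have hed : e ≫ d = d - d ≫ e := eq_sub_of_add_eq hsum
  have hdd2 : ∀ {Z : C} (k : X ⟶ Z), d ≫ d ≫ k = 0 := fun k => by
    rw [← assoc, hdd, zero_comp]
  have hee2 : ∀ {Z : C} (k : X ⟶ Z), e ≫ e ≫ k = e ≫ k := fun k => by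
    rw [← assoc, hee]
  have hded : d ≫ e ≫ d = 0 := by
    rw [hed, comp_sub, hdd, hdd2, sub_self]
  have hede : e ≫ d ≫ e = 0 := by
    rw [hde, comp_sub, hee2, sub_self]
  have hded2 : ∀ {Z : C} (k : X ⟶ Z), d ≫ e ≫ d ≫ k = 0 := fun k => by
    rw [← assoc, ← assoc, show (d ≫ e) ≫ d = d ≫ e ≫ d from assoc _ _ _, hded, zero_comp]
  have hede2 : ∀ {Z : C} (k : X ⟶ Z), e ≫ d ≫ e ≫ k = 0 := fun k => by
    rw [← assoc, ← assoc, show (e ≫ d) ≫ e = e ≫ d ≫ e from assoc _ _ _, hede, zero_comp]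
  refine ⟨𝟙 X + (e ≫ d + e ≫ d) - d, 𝟙 X + (d ≫ e + d ≫ e) - d, ?_, ?_, ?_⟩
  · simp only [comp_add, add_comp, comp_sub, sub_comp, comp_id, id_comp, assoc,
      hee, hdd, hee2, hdd2, hded, hede, hded2, hede2, comp_zero, zero_comp]
    rw [hde]
    abel
  · simp only [comp_add, add_comp, comp_sub, sub_comp, comp_id, id_comp, assoc,
      hee, hdd, hee2, hdd2, hded, hede, hded2, hede2, comp_zero, zero_comp]
    rw [hde]
    abel
  · simp only [comp_add, add_comp, comp_sub, sub_comp, comp_id, id_comp, assoc,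
      hee, hdd, hee2, hdd2, hded, hede, hded2, hede2, comp_zero, zero_comp]
    rw [hde]
    abel

/-- Gluing of splittings of idempotents along a distinguished triangle. -/
lemma glue_split {T : Triangle C} (hT : T ∈ distTriang C)
    (e : T.obj₂ ⟶ T.obj₂) (he : e ≫ e = e)
    (a : T.obj₁ ⟶ T.obj₁) (b : T.obj₃ ⟶ T.obj₃)
    (comm₁ : T.mor₁ ≫ e = a ≫ T.mor₁) (comm₂ : T.mor₂ ≫ b = e ≫ T.mor₂)
    (comm₃ : T.mor₃ ≫ a⟦(1 : ℤ)⟧' = b ≫ T.mor₃)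
    (ha : ∃ (A' : C) (i : A' ⟶ T.obj₁) (p : T.obj₁ ⟶ A'), i ≫ p = 𝟙 A' ∧ p ≫ i = a)
    (hb : ∃ (B' : C) (i : B' ⟶ T.obj₃) (p : T.obj₃ ⟶ B'), i ≫ p = 𝟙 B' ∧ p ≫ i = b) :
    ∃ (Y : C) (i : Y ⟶ T.obj₂) (p : T.obj₂ ⟶ Y), i ≫ p = 𝟙 Y ∧ p ≫ i = e := by
  obtain ⟨A', σA, πA, hA1, hA2⟩ := ha
  obtain ⟨B', σB, πB, hB1, hB2⟩ := hb
  obtain ⟨X₁, f₁, g₁, hT1⟩ := distinguished_cocone_triangle₂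
    (σB ≫ T.mor₃ ≫ πA⟦(1 : ℤ)⟧' : B' ⟶ A'⟦(1 : ℤ)⟧)
  obtain ⟨φ, hφ1, hφ2⟩ := complete_distinguished_triangle_morphism₂ _ T hT1 hT σA σB (by
    change (σB ≫ T.mor₃ ≫ πA⟦(1 : ℤ)⟧') ≫ σA⟦(1 : ℤ)⟧' = σB ≫ T.mor₃
    rw [assoc, assoc, ← Functor.map_comp, hA2, comm₃, ← hB2, assoc πB σB,
      ← assoc σB πB, hB1, id_comp])
  obtain ⟨ψ, hψ1, hψ2⟩ := complete_distinguished_triangle_morphism₂ T _ hT hT1 πA πB (by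
    change T.mor₃ ≫ πA⟦(1 : ℤ)⟧' = πB ≫ (σB ≫ T.mor₃ ≫ πA⟦(1 : ℤ)⟧')
    rw [← assoc πB σB, hB2, ← assoc b T.mor₃, ← comm₃, assoc, ← Functor.map_comp,
      ← hA2, assoc πA σA, hA1, comp_id])
  change X₁ ⟶ T.obj₂ at φ
  change T.obj₂ ⟶ X₁ at ψ
  change f₁ ≫ φ = σA ≫ T.mor₁ at hφ1
  change g₁ ≫ σB = φ ≫ T.mor₂ at hφ2
  change T.mor₁ ≫ ψ = πA ≫ f₁ at hψ1
  change T.mor₂ ≫ πB = ψ ≫ g₁ at hψ2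
  change X₁ ⟶ T.obj₂ at φ
  change T.obj₂ ⟶ X₁ at ψ
  -- u := φ ≫ ψ is unipotent
  have hu1 : f₁ ≫ (φ ≫ ψ) = f₁ := by
    rw [← assoc, hφ1, assoc, hψ1, ← assoc, hA1, id_comp]
  have hu2 : (φ ≫ ψ) ≫ g₁ = g₁ := by
    rw [assoc, ← hψ2, ← assoc, ← hφ2, assoc, hB1, comp_id]
  set θ : X₁ ⟶ X₁ := φ ≫ ψ - 𝟙 X₁ with hθ
  have hθ1 : f₁ ≫ θ = 0 := by rw [hθ, comp_sub, hu1, comp_id, sub_self]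
  have hθ2 : θ ≫ g₁ = 0 := by rw [hθ, sub_comp, hu2, id_comp, sub_self]
  obtain ⟨τ, hτ⟩ := Triangle.coyoneda_exact₂ _ hT1 θ hθ2
  change X₁ ⟶ A' at τ
  change θ = τ ≫ f₁ at hτ
  have hθθ : θ ≫ θ = 0 := by rw [hτ, assoc, ← hτ, hθ1, comp_zero]
  set w : X₁ ⟶ X₁ := 𝟙 X₁ - θ with hw
  have huw : (φ ≫ ψ) ≫ w = 𝟙 X₁ := by
    have hφψ : φ ≫ ψ = 𝟙 X₁ + θ := by rw [hθ]; abel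
    rw [hφψ, hw]
    simp only [comp_sub, sub_comp, add_comp, comp_id, id_comp, hθθ]
    abel
  have hfw : f₁ ≫ w = f₁ := by rw [hw, comp_sub, comp_id, hθ1, sub_zero]
  have hwg : w ≫ g₁ = g₁ := by rw [hw, sub_comp, id_comp, hθ2, sub_zero]
  set ψ' : T.obj₂ ⟶ X₁ := ψ ≫ w with hψ'
  have hφψ' : φ ≫ ψ' = 𝟙 X₁ := by rw [hψ', ← assoc, huw]
  set p : T.obj₂ ⟶ T.obj₂ := ψ' ≫ φ with hp
  have hppr : p ≫ p = p := by rw [hp, assoc, ← assoc φ ψ', hφψ', id_comp]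
  have hfp : T.mor₁ ≫ p = T.mor₁ ≫ e := by
    calc T.mor₁ ≫ (ψ ≫ w) ≫ φ = ((T.mor₁ ≫ ψ) ≫ w) ≫ φ := by simp only [assoc]
      _ = ((πA ≫ f₁) ≫ w) ≫ φ := by rw [hψ1]
      _ = (πA ≫ f₁) ≫ φ := by rw [assoc πA f₁ w, hfw]
      _ = πA ≫ σA ≫ T.mor₁ := by rw [assoc, hφ1]
      _ = a ≫ T.mor₁ := by rw [← assoc, hA2]
      _ = T.mor₁ ≫ e := comm₁.symm
  have hpg : p ≫ T.mor₂ = e ≫ T.mor₂ := by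
    calc ((ψ ≫ w) ≫ φ) ≫ T.mor₂ = ψ ≫ w ≫ φ ≫ T.mor₂ := by simp only [assoc]
      _ = ψ ≫ w ≫ g₁ ≫ σB := by rw [← hφ2]
      _ = (ψ ≫ g₁) ≫ σB := by rw [← assoc w g₁ σB, hwg, assoc]
      _ = (T.mor₂ ≫ πB) ≫ σB := by rw [hψ2]
      _ = T.mor₂ ≫ b := by rw [assoc, hB2]
      _ = e ≫ T.mor₂ := comm₂
  set d : T.obj₂ ⟶ T.obj₂ := p - e with hd
  have hfd : T.mor₁ ≫ d = 0 := by rw [hd, comp_sub, hfp, sub_self]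
  have hdg : d ≫ T.mor₂ = 0 := by rw [hd, sub_comp, hpg, sub_self]
  obtain ⟨ε, hε⟩ := Triangle.coyoneda_exact₂ _ hT d hdg
  have hdd : d ≫ d = 0 := by rw [hε, assoc, ← hε, hfd, comp_zero]
  have hpe : e + d = p := by rw [hd]; abel
  obtain ⟨c, c', hcc', hc'c, hec⟩ := conj_idem e d he hdd (by rw [hpe]; exact hppr)
  rw [hpe] at hec
  refine ⟨X₁, φ ≫ c', c ≫ ψ', ?_, ?_⟩
  · rw [assoc, ← assoc c' c, hc'c, id_comp, hφψ']
  · rw [assoc, ← assoc ψ' φ, ← hp, ← assoc c p, ← hec, assoc, hcc', comp_id]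

/-- `≥ n` can be detected by orthogonality against `≤ n - 1` objects. -/
lemma ge_of_orth (n : ℤ) (Q : C)
    (hQ : ∀ (W : C), t.le (n - 1) W → ∀ (φ : W ⟶ Q), φ = 0) : t.ge n Q := by
  obtain ⟨W, V, hW, hV, f, g, h, hT⟩ := t.exists_triangle Q (n - 1) n (by omega)
  have hf : f = 0 := hQ W hW f
  have hWzero : IsZero W := by
    rw [IsZero.iff_id_eq_zero]
    obtain ⟨σ, hσ⟩ := Triangle.coyoneda_exact₂ _ (inv_rot_of_distTriang _ hT) (𝟙 W)
      (by change 𝟙 W ≫ f = 0; rw [hf, comp_zero])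
    have hV' : t.ge (n + 1) (V⟦(-1 : ℤ)⟧) := t.ge_shift n (-1) (n + 1) (by omega) V hV
    rw [hσ, tstr_zero t (by omega : n - 1 < n + 1) σ hW hV', zero_comp]
    rfl
  have : IsIso g := (Triangle.isZero₁_iff_isIso₂ _ hT).1 hWzero
  exact (t.ge n).prop_of_iso (asIso g).symm hV

/-- `≤ n` can be detected by orthogonality against `≥ n + 1` objects. -/
lemma le_of_orth (n : ℤ) (Q : C)
    (hQ : ∀ (W : C), t.ge (n + 1) W → ∀ (φ : Q ⟶ W), φ = 0) : t.le n Q := by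
  obtain ⟨W, V, hW, hV, f, g, h, hT⟩ := t.exists_triangle Q n (n + 1) rfl
  have hg : g = 0 := hQ V hV g
  have hVzero : IsZero V := by
    rw [IsZero.iff_id_eq_zero]
    obtain ⟨k, hk⟩ := Triangle.yoneda_exact₃ _ hT (𝟙 V) (by change g ≫ 𝟙 V = 0; rw [hg, zero_comp])
    have hW' : t.le (n - 1) (W⟦(1 : ℤ)⟧) := t.le_shift n 1 (n - 1) (by omega) W hW
    rw [hk, tstr_zero t (by omega : n - 1 < n + 1) k hW' hV, comp_zero]
    rfl
  have : IsIso f := (Triangle.isZero₃_iff_isIso₁ _ hT).1 hVzero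
  exact (t.le n).prop_of_iso (asIso f) hW

/-- `≥ n` is closed under extensions. -/
lemma ge_ext {T : Triangle C} (hT : T ∈ distTriang C) (n : ℤ)
    (h₁ : t.ge n T.obj₁) (h₃ : t.ge n T.obj₃) : t.ge n T.obj₂ := by
  apply ge_of_orth
  intro W hW φ
  obtain ⟨ξ, hξ⟩ := Triangle.coyoneda_exact₂ _ hT φ
    (tstr_zero t (by omega : n - 1 < n) _ hW h₃)
  rw [hξ, tstr_zero t (by omega : n - 1 < n) ξ hW h₁, zero_comp]

/-- `≤ n` is closed under extensions. -/
lemma le_ext {T : Triangle C} (hT : T ∈ distTriang C) (n : ℤ)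
    (h₁ : t.le n T.obj₁) (h₃ : t.le n T.obj₃) : t.le n T.obj₂ := by
  apply le_of_orth
  intro W hW φ
  obtain ⟨ξ, hξ⟩ := Triangle.yoneda_exact₂ _ hT φ
    (tstr_zero t (by omega : n < n + 1) _ h₁ hW)
  rw [hξ, tstr_zero t (by omega : n < n + 1) ξ h₃ hW, comp_zero]

/-- Idempotents split on objects of bounded amplitude, by induction on the amplitude. -/
lemma split_of_window : ∀ (n : ℕ) (a : ℤ) (X : C), t.ge a X → t.le (a + n) X →
    ∀ (e : X ⟶ X), e ≫ e = e →
      ∃ (Y : C) (i : Y ⟶ X) (p : X ⟶ Y), i ≫ p = 𝟙 Y ∧ p ≫ i = e := by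
  intro n
  induction n with
  | zero =>
    intro a X hge hle e he
    exact heart_split t a X (by simpa using hle) hge e he
  | succ n ih =>
    intro a X hge hle e he
    obtain ⟨A, B, hA, hB, f, g, h, hT⟩ := t.exists_triangle X a (a + 1) rfl
    set T := Triangle.mk f g h with hTdef
    have hm1 : T.mor₁ = f := rfl
    have hm2 : T.mor₂ = g := rfl
    have hm3 : T.mor₃ = h := rfl
    -- A is in the heart at level a
    have hAge : t.ge a A := by
      apply ge_ext t (inv_rot_of_distTriang _ hT) a
      · exact t.ge_antitone (by omega : a ≤ a + 2) _
          (t.ge_shift (a + 1) (-1) (a + 2) (by omega) B hB)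
      · exact hge
    -- B has amplitude n
    have hBle : t.le (a + 1 + n) B := by
      apply le_ext t (rot_of_distTriang _ hT) (a + 1 + n)
      · exact t.le_monotone (by push_cast; omega) _ hle
      · exact t.le_monotone (by omega : a - 1 ≤ a + 1 + n) _
          (t.le_shift a 1 (a - 1) (by omega) A hA)
    -- the idempotent on A
    have hfeg : (f ≫ e) ≫ g = 0 :=
      tstr_zero t (by omega : a < a + 1) _ hA hB
    obtain ⟨aa, haa⟩ := Triangle.coyoneda_exact₂ _ hT (f ≫ e) hfeg
    rw [hm1] at haa
    change A ⟶ A at aa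
    change f ≫ e = aa ≫ f at haa
    have cancelA : ∀ (x y : A ⟶ A), x ≫ f = y ≫ f → x = y := by
      intro x y hxy
      have hz : (x - y) ≫ f = 0 := by rw [sub_comp, hxy, sub_self]
      obtain ⟨ξ, hξ⟩ := Triangle.coyoneda_exact₂ _ (inv_rot_of_distTriang _ hT) (x - y)
        (by change (x - y) ≫ f = 0; exact hz)
      have hB' : t.ge (a + 2) (B⟦(-1 : ℤ)⟧) := t.ge_shift (a + 1) (-1) (a + 2) (by omega) B hB
      rw [tstr_zero t (by omega : a < a + 2) ξ hA hB', zero_comp] at hξ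
      exact sub_eq_zero.mp hξ
    have haa2 : aa ≫ aa = aa := by
      apply cancelA
      rw [assoc, ← haa, ← assoc, ← haa, assoc, he]
    -- the idempotent on B
    obtain ⟨bb, hbb1, hbb2⟩ := complete_distinguished_triangle_morphism T T hT hT aa e (by rw [hm1]; exact haa)
    rw [hm2] at hbb1
    rw [hm3] at hbb2
    change B ⟶ B at bb
    change g ≫ bb = e ≫ g at hbb1
    change h ≫ aa⟦(1 : ℤ)⟧' = bb ≫ h at hbb2
    have cancelB : ∀ (x y : B ⟶ B), g ≫ x = g ≫ y → x = y := by
      intro x y hxy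
      have hz : g ≫ (x - y) = 0 := by rw [comp_sub, hxy, sub_self]
      obtain ⟨k, hk⟩ := Triangle.yoneda_exact₃ _ hT (x - y) (by rw [hm2]; exact hz)
      rw [hm3] at hk
      change A⟦(1 : ℤ)⟧ ⟶ B at k
      change x - y = h ≫ k at hk
      have hA' : t.le (a - 1) (A⟦(1 : ℤ)⟧) := t.le_shift a 1 (a - 1) (by omega) A hA
      rw [tstr_zero t (by omega : a - 1 < a + 1) k hA' hB, comp_zero] at hk
      rwa [sub_eq_zero] at hk
    have hbb2' : bb ≫ bb = bb := by
      apply cancelB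
      rw [← assoc, hbb1, assoc, hbb1, ← assoc, he]
    -- split both pieces
    have hsplitA := heart_split t a A hA hAge aa haa2
    have hsplitB := ih (a + 1) B (t.ge_antitone (le_refl _) _ hB) hBle bb hbb2'
    exact glue_split hT e he aa bb (by rw [hm1]; exact haa) (by rw [hm2]; exact hbb1)
      (by rw [hm3]; exact hbb2) hsplitA hsplitB

end Aux

/-- A small stable ∞-category (formalized via its triangulated homotopy
category) admitting a bounded t-structure is idempotent complete: every idempotent splits. -/
theorem idempotentComplete_of_bounded_t_structure
    (C : Type u) [Category.{v} C] [Preadditive C] [HasZeroObject C] [HasShift C ℤ]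
    [∀ n : ℤ, (shiftFunctor C n).Additive] [Pretriangulated C]
    (t : TStructure C)
    (hbounded : ∀ X : C, ∃ n : ℕ, t.le (n : ℤ) X ∧ t.ge (-(n : ℤ)) X) :
    IsIdempotentComplete C := by
  refine ⟨fun X e he => ?_⟩
  obtain ⟨n, hle, hge⟩ := hbounded X
  have hle' : t.le (-(n : ℤ) + ((2 * n : ℕ) : ℤ)) X := by
    rwa [show (-(n : ℤ) + ((2 * n : ℕ) : ℤ)) = (n : ℤ) by push_cast; ring]
  exact split_of_window t (2 * n) (-(n : ℤ)) X hge hle' e he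
end

section
/- Let ℰ be an idempotent complete exact category, viewed via the Gabriel-Quillen embedding as an extension-closed full subcategory of an abelian category 𝒜 closed under kernels of admissible epimorphisms. A bounded-below chain complex X of objects of ℰ is acyclic (in the exact-category sense: each differential factors as an admissible epi followed by an admissible mono through cycle objects in ℰ) if and only if X has vanishing homology when regarded as a complex in 𝒜. Consequently, any bounded-below complex of ℰ-objects chain homotopy equivalent to an acyclic complex is itself acyclic, and a direct summand (in the homotopy category) of an acyclic complex is acyclic. -/
open CategoryTheory Category Limits

universe v u

variable {A : Type u} [Category.{v} A] [Abelian A]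

/-- A bounded-below complex with entries in the exact subcategory `P ⊆ A` is *acyclic in the
exact-category sense* if each differential factors as an admissible epimorphism onto a cycle
object `Z ∈ P` followed by an admissible monomorphism, `Z` being a kernel of the next
differential and a cokernel of the previous one. -/
def ExactAcyclic (P : A → Prop) (X : ChainComplex A ℕ) : Prop :=
  ∀ n : ℕ, ∃ (Z : A) (_ : P Z) (p : X.X (n + 1) ⟶ Z) (i : Z ⟶ X.X n)
    (_ : p ≫ i = X.d (n + 1) n) (hw : i ≫ X.d n (n - 1) = 0)
    (hw' : X.d (n + 2) (n + 1) ≫ p = 0),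
    Epi p ∧ Mono i ∧
    Nonempty (IsLimit (KernelFork.ofι i hw)) ∧
    Nonempty (IsColimit (CokernelCofork.ofπ p hw'))

private lemma EA.next_eq (n : ℕ) : (ComplexShape.down ℕ).next n = n - 1 := by
  cases n with
  | zero => simp [ChainComplex.next_nat_zero]
  | succ m => simp [ChainComplex.next_nat_succ m]

private lemma EA.exactAt_iff (X : ChainComplex A ℕ) (n : ℕ) :
    X.ExactAt n ↔ (X.sc' (n + 1) n (n - 1)).Exact :=
  X.exactAt_iff' (n + 1) n (n - 1) (ChainComplex.prev ℕ n) (EA.next_eq n)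

private lemma EA.forward (P : A → Prop) (X : ChainComplex A ℕ)
    (h : ExactAcyclic P X) : ∀ n, X.ExactAt n := by
  intro n
  obtain ⟨Z, hZ, p, i, hpi, hw, hw', hp, hi, ⟨hl⟩, ⟨hc⟩⟩ := h n
  rw [EA.exactAt_iff, ShortComplex.exact_iff_epi_kernel_lift]
  set S := X.sc' (n + 1) n (n - 1)
  have he : (IsLimit.conePointUniqueUpToIso hl (kernelIsKernel (X.d n (n - 1)))).hom ≫
      kernel.ι (X.d n (n - 1)) = i := by
    simpa using IsLimit.conePointUniqueUpToIso_hom_comp hl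
      (kernelIsKernel (X.d n (n - 1))) WalkingParallelPair.zero
  have heq : kernel.lift S.g S.f S.zero =
      p ≫ (IsLimit.conePointUniqueUpToIso hl (kernelIsKernel (X.d n (n - 1)))).hom := by
    refine (cancel_mono (kernel.ι S.g)).1 ?_
    show kernel.lift S.g S.f S.zero ≫ kernel.ι S.g = _
    rw [kernel.lift_ι]
    refine Eq.trans ?_ (assoc _ _ _).symm
    exact hpi.symm.trans (congrArg (p ≫ ·) he).symm
  rw [heq]
  exact @epi_comp _ _ _ _ _ p hp _ (@IsIso.epi_of_iso _ _ _ _ _ (Iso.isIso_hom _))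

private lemma EA.backward (P : A → Prop) [ObjectProperty.IsClosedUnderIsomorphisms P]
    (hker : ∀ (A₁ A₂ : A) (g : A₁ ⟶ A₂), Epi g → P A₁ → P A₂ → P (kernel g))
    (X : ChainComplex A ℕ) (hX : ∀ n, P (X.X n))
    (hex : ∀ n, X.ExactAt n) : ExactAcyclic P X := by
  have hepi : ∀ n, Epi (kernel.lift (X.d n (n - 1)) (X.d (n + 1) n) (X.d_comp_d _ _ _)) := by
    intro n
    have := (EA.exactAt_iff X n).1 (hex n)
    rw [ShortComplex.exact_iff_epi_kernel_lift] at this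
    exact this
  have hPker : ∀ n, P (kernel (X.d n (n - 1))) := by
    intro n
    induction n with
    | zero =>
        have h0 : X.d 0 (0 - 1) = 0 := X.shape _ _ (by simp)
        exact ObjectProperty.prop_of_iso P (kernelIsoOfEq h0 ≪≫ kernelZeroIsoSource).symm (hX 0)
    | succ m ih =>
        have hd : X.d (m + 1) m =
            kernel.lift (X.d m (m - 1)) (X.d (m + 1) m) (X.d_comp_d _ _ _) ≫
              kernel.ι (X.d m (m - 1)) := (kernel.lift_ι _ _ _).symm
        have e : kernel (X.d (m + 1) m) ≅
            kernel (kernel.lift (X.d m (m - 1)) (X.d (m + 1) m) (X.d_comp_d _ _ _)) :=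
          kernelIsoOfEq hd ≪≫ kernelCompMono _ _
        have : (m + 1 : ℕ) - 1 = m := rfl
        rw [this]
        exact ObjectProperty.prop_of_iso P e.symm (hker _ _ _ (hepi m) (hX (m + 1)) ih)
  intro n
  refine ⟨kernel (X.d n (n - 1)), hPker n,
    kernel.lift (X.d n (n - 1)) (X.d (n + 1) n) (X.d_comp_d _ _ _),
    kernel.ι (X.d n (n - 1)), kernel.lift_ι _ _ _, kernel.condition _, ?_, hepi n,
    inferInstance, ⟨kernelIsKernel _⟩, ?_⟩
  · rw [← cancel_mono (kernel.ι (X.d n (n - 1))), assoc, kernel.lift_ι, zero_comp,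
      X.d_comp_d]
  · -- IsColimit (CokernelCofork.ofπ p hw')
    set p := kernel.lift (X.d n (n - 1)) (X.d (n + 1) n) (X.d_comp_d _ _ _)
    have hw' : X.d (n + 2) (n + 1) ≫ p = 0 := by
      rw [← cancel_mono (kernel.ι (X.d n (n - 1))), assoc, kernel.lift_ι, zero_comp,
        X.d_comp_d]
    set T : ShortComplex A := ShortComplex.mk (X.d (n + 2) (n + 1)) p hw'
    have hT : T.Exact := by
      rw [ShortComplex.exact_iff_exact_up_to_refinements]
      intro B x₂ hx₂
      have hS := (EA.exactAt_iff X (n + 1)).1 (hex (n + 1))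
      rw [ShortComplex.exact_iff_exact_up_to_refinements] at hS
      have : x₂ ≫ X.d (n + 1) ((n + 1) - 1) = 0 := by
        show x₂ ≫ X.d (n + 1) n = 0
        rw [← kernel.lift_ι (X.d n (n - 1)) (X.d (n + 1) n) (X.d_comp_d _ _ _),
          ← assoc]
        show (x₂ ≫ p) ≫ _ = 0
        rw [hx₂, zero_comp]
      obtain ⟨B', π, hπ, x₁, fac⟩ := hS x₂ this
      exact ⟨B', π, hπ, x₁, fac⟩
    have : Epi T.g := hepi n
    exact ⟨hT.gIsCokernel⟩


set_option linter.unusedVariables false in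
/-- Let `ℰ` be an idempotent complete exact category, realized via the
Gabriel–Quillen embedding as an extension-closed full subcategory `P` of an abelian category
`A`, closed under kernels of admissible epimorphisms.  Then a bounded-below complex of
`ℰ`-objects is acyclic in the exact-category sense iff it has vanishing homology in `A`;
consequently `ℰ`-complexes homotopy equivalent to, or homotopy retracts (direct summands in
the homotopy category) of, acyclic complexes are acyclic. -/
theorem exactAcyclic_iff_exact_and_closure
    (P : A → Prop) [ObjectProperty.IsClosedUnderIsomorphisms P]
    (hext : ∀ S : ShortComplex A, S.ShortExact → P S.X₁ → P S.X₃ → P S.X₂)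
    (hker : ∀ (A₁ A₂ : A) (g : A₁ ⟶ A₂), Epi g → P A₁ → P A₂ → P (kernel g)) :
    (∀ X : ChainComplex A ℕ, (∀ n, P (X.X n)) →
      (ExactAcyclic P X ↔ ∀ n, X.ExactAt n)) ∧
    (∀ X Y : ChainComplex A ℕ, (∀ n, P (X.X n)) → (∀ n, P (Y.X n)) →
      ExactAcyclic P X → Nonempty (HomotopyEquiv Y X) → ExactAcyclic P Y) ∧
    (∀ X Y : ChainComplex A ℕ, (∀ n, P (X.X n)) → (∀ n, P (Y.X n)) →
      ExactAcyclic P X → ∀ (i : Y ⟶ X) (r : X ⟶ Y),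
        Nonempty (Homotopy (i ≫ r) (𝟙 Y)) → ExactAcyclic P Y) := by
  have main : ∀ X : ChainComplex A ℕ, (∀ n, P (X.X n)) →
      (ExactAcyclic P X ↔ ∀ n, X.ExactAt n) := fun X hX =>
    ⟨EA.forward P X, EA.backward P hker X hX⟩
  refine ⟨main, ?_, ?_⟩
  · intro X Y hX hY hacy ⟨e⟩
    refine (main Y hY).2 (fun n => ?_)
    have hz : IsZero (X.homology n) :=
      (X.exactAt_iff_isZero_homology n).1 ((main X hX).1 hacy n)
    rw [Y.exactAt_iff_isZero_homology n]
    exact hz.of_iso (e.toHomologyIso n)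
  · intro X Y hX hY hacy i r ⟨h⟩
    refine (main Y hY).2 (fun n => ?_)
    have hz : IsZero (X.homology n) :=
      (X.exactAt_iff_isZero_homology n).1 ((main X hX).1 hacy n)
    rw [Y.exactAt_iff_isZero_homology n, IsZero.iff_id_eq_zero]
    have := h.homologyMap_eq n
    rw [HomologicalComplex.homologyMap_comp, HomologicalComplex.homologyMap_id] at this
    rw [← this, hz.eq_of_tgt (HomologicalComplex.homologyMap i n) 0, zero_comp]
end
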